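/- For every symmetric positive semidefinite K ∈ ℝ^{n×n}, the matrix Iₙ − K H₃₃ is invertible, and F₀(K) = (Iₙ − K H₃₃)⁻¹ K is symmetric (i.e. F₀(K)ᵀ = F₀(K)). -/

import Mathlib

open Matrix

/-- For every symmetric positive semidefinite `K`, the matrix
`Iₙ − K H₃₃` is invertible and `F₀(K) = (Iₙ − K H₃₃)⁻¹ K` is symmetric. -/
theorem stmt_2 (n : ℕ) (hn : 1 ≤ n) (δ δ₁ : ℝ) (hδ : 0 < δ) (hδδ₁ : δ < δ₁)
    (H33 : Matrix (Fin n) (Fin n) ℝ) (hsym : H33ᵀ = H33)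
    (hlb : (H33 + δ₁ • 1).PosSemidef) (hub : (-(δ • 1) - H33).PosSemidef) :
    ∀ K : Matrix (Fin n) (Fin n) ℝ, K.PosSemidef →
      IsUnit (1 - K * H33) ∧ ((1 - K * H33)⁻¹ * K)ᵀ = (1 - K * H33)⁻¹ * K := by
  intro K hK
  open scoped MatrixOrder in set S := CFC.sqrt K with hSdef
  have hSps : S.PosSemidef := by open scoped MatrixOrder in exact (CFC.sqrt_nonneg K).posSemidef
  have hSsym : Sᵀ = S := by
    have := hSps.isHermitian
    simpa [Matrix.IsHermitian, Matrix.conjTranspose_eq_transpose_of_trivial] using this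
  have hSS : S * S = K := by open scoped MatrixOrder in exact CFC.sqrt_mul_sqrt_self K hK.nonneg
  set M : Matrix (Fin n) (Fin n) ℝ := 1 - S * H33 * S with hMdef
  have hMsym : Mᵀ = M := by
    simp [hMdef, Matrix.transpose_sub, Matrix.transpose_mul, hsym, hSsym, Matrix.mul_assoc]
  -- M is positive definite
  have hMpd : M.PosDef := by
    refine Matrix.PosDef.of_dotProduct_mulVec_pos ?_ ?_
    · rw [Matrix.IsHermitian, Matrix.conjTranspose]
      exact (Matrix.conjTranspose_eq_transpose_of_trivial M).trans hMsym
    · intro x hx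
      have hstar : star x = x := by simp
      rw [hstar]
      set y := S *ᵥ x with hy
      have hub' := hub.dotProduct_mulVec_nonneg y
      rw [show star y = y by simp] at hub'
      have hyH : y ⬝ᵥ (H33 *ᵥ y) ≤ 0 := by
        have h1 : ((-(δ • 1) - H33) : Matrix (Fin n) (Fin n) ℝ) *ᵥ y
            = -(δ • y) - H33 *ᵥ y := by
          simp [Matrix.sub_mulVec, Matrix.neg_mulVec, Matrix.smul_mulVec]
        rw [h1] at hub'
        have h2 : y ⬝ᵥ (-(δ • y) - H33 *ᵥ y)
            = -(δ * (y ⬝ᵥ y)) - y ⬝ᵥ (H33 *ᵥ y) := by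
          simp [dotProduct_sub, dotProduct_neg, dotProduct_smul, smul_eq_mul]
        rw [h2] at hub'
        have hyy : (0:ℝ) ≤ y ⬝ᵥ y := by simpa using dotProduct_self_star_nonneg y
        nlinarith [mul_nonneg hδ.le hyy]
      have hMx : M *ᵥ x = x - S *ᵥ (H33 *ᵥ y) := by
        simp [hMdef, Matrix.sub_mulVec, Matrix.mulVec_mulVec, hy, Matrix.mul_assoc]
      have hdot : x ⬝ᵥ (M *ᵥ x) = x ⬝ᵥ x - y ⬝ᵥ (H33 *ᵥ y) := by
        rw [hMx, dotProduct_sub]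
        congr 1
        have hvm : x ᵥ* S = S *ᵥ x := by
          nth_rewrite 1 [← hSsym]; rw [Matrix.vecMul_transpose]
        rw [hy, Matrix.dotProduct_mulVec, hvm]
      have hxx : 0 < x ⬝ᵥ x := by
        have := dotProduct_self_star_pos_iff (v := x) |>.2 hx
        simpa using this
      rw [hdot]; linarith
  have hMdet : IsUnit M.det := hMpd.det_pos.ne'.isUnit
  have hMunit : IsUnit M := (Matrix.isUnit_iff_isUnit_det M).2 hMdet
  -- determinant identity
  have hdet : (1 - K * H33).det = M.det := by
    calc (1 - K * H33).det = (1 - S * (S * H33)).det := by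
            rw [← hSS, Matrix.mul_assoc]
      _ = (1 - (S * H33) * S).det := by
            rw [Matrix.det_one_sub_mul_comm]
      _ = M.det := by rw [hMdef]
  have hUnit : IsUnit (1 - K * H33) := by
    rw [Matrix.isUnit_iff_isUnit_det, hdet]; exact hMdet
  refine ⟨hUnit, ?_⟩
  -- F₀(K) = S * M⁻¹ * S
  have hMM : M * M⁻¹ = 1 := Matrix.mul_nonsing_inv M hMdet
  have key : (1 - K * H33) * (S * M⁻¹ * S) = K := by
    have : (1 - K * H33) * (S * M⁻¹ * S) = S * (M * M⁻¹) * S := by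
      rw [← hSS]
      rw [sub_mul, one_mul, hMdef, sub_mul, Matrix.one_mul]
      noncomm_ring
    rw [this, hMM, Matrix.mul_one, hSS]
  have hF : (1 - K * H33)⁻¹ * K = S * M⁻¹ * S := by
    calc (1 - K * H33)⁻¹ * K
        = (1 - K * H33)⁻¹ * ((1 - K * H33) * (S * M⁻¹ * S)) := by rw [key]
      _ = ((1 - K * H33)⁻¹ * (1 - K * H33)) * (S * M⁻¹ * S) := by
            simp only [Matrix.mul_assoc]
      _ = S * M⁻¹ * S := by
            rw [Matrix.nonsing_inv_mul _ ((Matrix.isUnit_iff_isUnit_det _).1 hUnit),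
              Matrix.one_mul]
  rw [hF]
  rw [Matrix.transpose_mul, Matrix.transpose_mul, Matrix.transpose_nonsing_inv, hMsym, hSsym,
    Matrix.mul_assoc]
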